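/- The language L = { w ∈ 𝔸* : every letter occurring in w occurs at least twice in w } is not recognizable by any nondeterministic orbit-finite nominal automaton (NOFA). -/

import Mathlib

abbrev Atom := ℕ

/-- A finite renaming. -/
def IsRenaming (ρ : Atom → Atom) : Prop := ({a | ρ a ≠ a} : Set Atom).Finite

/-- A language is positive if closed under letterwise application of all finite renamings. -/
def Positive (L : Set (List Atom)) : Prop :=
  ∀ ρ : Atom → Atom, IsRenaming ρ → ∀ w ∈ L, w.map ρ ∈ L

/-- The group `Perm(𝔸)` of finite permutations, as a subgroup of `Equiv.Perm 𝔸`. -/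
def FinPerm : Subgroup (Equiv.Perm Atom) where
  carrier := {π | ({a | π a ≠ a} : Set Atom).Finite}
  one_mem' := by
    have h : {a : Atom | (1 : Equiv.Perm Atom) a ≠ a} = ∅ := by ext a; simp
    show ({a : Atom | (1 : Equiv.Perm Atom) a ≠ a} : Set Atom).Finite
    rw [h]; exact Set.finite_empty
  mul_mem' := by
    intro π σ hπ hσ
    refine Set.Finite.subset (Set.Finite.union hπ hσ) ?_
    intro a ha
    simp only [Set.mem_setOf_eq, Set.mem_union] at *
    by_contra h
    push_neg at h
    exact ha (by rw [Equiv.Perm.mul_apply, h.2, h.1])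
  inv_mem' := by
    intro π hπ
    refine Set.Finite.subset hπ ?_
    intro a ha
    simp only [Set.mem_setOf_eq] at *
    intro h
    have h2 : π⁻¹ (π a) = π⁻¹ a := congrArg _ h
    rw [show π⁻¹ (π a) = a from by simp] at h2
    exact ha h2.symm

/-- The monoid `Fin(𝔸)` of finite renamings, as a submonoid of `Function.End 𝔸`. -/
def FinRen : Submonoid (Function.End Atom) where
  carrier := {ρ | ({a | ρ a ≠ a} : Set Atom).Finite}
  one_mem' := by
    have h : {a : Atom | (1 : Function.End Atom) a ≠ a} = ∅ := by
      ext a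
      simp only [Set.mem_setOf_eq, Set.mem_empty_iff_false, iff_false, not_not]
      rfl
    show ({a : Atom | (1 : Function.End Atom) a ≠ a} : Set Atom).Finite
    rw [h]; exact Set.finite_empty
  mul_mem' := by
    intro f g hf hg
    refine Set.Finite.subset (Set.Finite.union hf hg) ?_
    intro a ha
    simp only [Set.mem_setOf_eq, Set.mem_union] at *
    by_contra h
    push_neg at h
    exact ha (by show f (g a) = a; rw [h.2, h.1])

/-- Acceptance of a word from a state. -/
def Accepts {Q : Type*} (δ : Q → Atom → Q → Prop) (F : Set Q) : Q → List Atom → Prop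
  | q, [] => q ∈ F
  | q, a :: w => ∃ q', δ q a q' ∧ Accepts δ F q' w

/-- A nondeterministic orbit-finite nominal automaton (NOFA): an orbit-finite
nominal `Perm(𝔸)`-set of states together with equivariant transitions and
equivariant sets of initial and final states. -/
structure NOFA where
  Q : Type
  smul : FinPerm → Q → Q
  one_smul : ∀ q, smul 1 q = q
  mul_smul : ∀ π σ q, smul (π * σ) q = smul π (smul σ q)
  nominal : ∀ q : Q, ∃ S : Set Atom, S.Finite ∧
    ∀ π σ : FinPerm, (∀ a ∈ S, (π : Equiv.Perm Atom) a = (σ : Equiv.Perm Atom) a) →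
      smul π q = smul σ q
  orbitFinite : Finite (Quot fun q q' : Q => ∃ π : FinPerm, smul π q = q')
  δ : Q → Atom → Q → Prop
  I : Set Q
  F : Set Q
  equiv_δ : ∀ (π : FinPerm) q a q', δ q a q' →
    δ (smul π q) ((π : Equiv.Perm Atom) a) (smul π q')
  equiv_I : ∀ (π : FinPerm), ∀ q ∈ I, smul π q ∈ I
  equiv_F : ∀ (π : FinPerm), ∀ q ∈ F, smul π q ∈ F

/-- The language of a NOFA. -/
def NOFA.lang (A : NOFA) : Set (List Atom) :=
  {w | ∃ q₀ ∈ A.I, Accepts A.δ A.F q₀ w}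

namespace NOFA

variable (A : NOFA)

/-- Multi-step transition relation. -/
def Steps : A.Q → List Atom → A.Q → Prop
  | q, [], q' => q = q'
  | q, a :: u, q' => ∃ r, A.δ q a r ∧ Steps r u q'

lemma accepts_append (u v : List Atom) (q : A.Q) :
    Accepts A.δ A.F q (u ++ v) ↔ ∃ q', Steps A q u q' ∧ Accepts A.δ A.F q' v := by
  induction u generalizing q with
  | nil =>
      constructor
      · intro h; exact ⟨q, rfl, h⟩
      · rintro ⟨q', rfl, h⟩; exact h
  | cons a u ih =>
      simp only [List.cons_append]
      constructor
      · rintro ⟨r, hδ, h⟩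
        obtain ⟨q', hs, ha⟩ := (ih r).1 h
        exact ⟨q', ⟨r, hδ, hs⟩, ha⟩
      · rintro ⟨q', ⟨r, hδ, hs⟩, ha⟩
        exact ⟨r, hδ, (ih r).2 ⟨q', hs, ha⟩⟩

lemma accepts_smul (π : FinPerm) (q : A.Q) (w : List Atom)
    (h : Accepts A.δ A.F q w) :
    Accepts A.δ A.F (A.smul π q) (w.map (π : Equiv.Perm Atom)) := by
  induction w generalizing q with
  | nil => exact A.equiv_F π q h
  | cons a w ih =>
      obtain ⟨r, hδ, h⟩ := h
      exact ⟨A.smul π r, A.equiv_δ π q a r hδ, ih r h⟩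

/-- `S` supports `q`. -/
def Supp (S : Finset Atom) (q : A.Q) : Prop :=
  ∀ π σ : FinPerm, (∀ a ∈ S, (π : Equiv.Perm Atom) a = (σ : Equiv.Perm Atom) a) →
    A.smul π q = A.smul σ q

lemma exists_supp (q : A.Q) : ∃ S : Finset Atom, A.Supp S q := by
  obtain ⟨S, hfin, hS⟩ := A.nominal q
  exact ⟨hfin.toFinset, fun π σ h => hS π σ fun a ha => h a (hfin.mem_toFinset.mpr ha)⟩

lemma supp_smul (S : Finset Atom) (q : A.Q) (h : A.Supp S q) (π : FinPerm) :
    A.Supp (S.image (π : Equiv.Perm Atom)) (A.smul π q) := by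
  intro π' σ' hag
  rw [← A.mul_smul, ← A.mul_smul]
  apply h
  intro a ha
  have := hag _ (Finset.mem_image_of_mem _ ha)
  simpa using this

lemma exists_bound : ∃ m : ℕ, ∀ q : A.Q, ∃ S : Finset Atom, A.Supp S q ∧ S.card ≤ m := by
  classical
  set R := fun q q' : A.Q => ∃ π : FinPerm, A.smul π q = q' with hR
  have hequiv : Equivalence R := by
    constructor
    · exact fun q => ⟨1, A.one_smul q⟩
    · rintro q q' ⟨π, rfl⟩
      exact ⟨π⁻¹, by rw [← A.mul_smul, inv_mul_cancel, A.one_smul]⟩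
    · rintro q q' q'' ⟨π, rfl⟩ ⟨σ, rfl⟩
      exact ⟨σ * π, A.mul_smul σ π q⟩
  haveI : Finite (Quot R) := A.orbitFinite
  let g : Quot R → ℕ := fun c => (A.exists_supp (Quot.out c)).choose.card
  obtain ⟨m, hm⟩ := (Set.finite_range g).bddAbove
  refine ⟨m, fun q => ?_⟩
  have h1 : Quot.mk R (Quot.out (Quot.mk R q)) = Quot.mk R q := Quot.out_eq _
  have h2 : R (Quot.out (Quot.mk R q)) q := hequiv.eqvGen_iff.mp (Quot.eq.mp h1)
  obtain ⟨π, hπ⟩ := h2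
  have key : ∃ S : Finset Atom, A.Supp S (Quot.out (Quot.mk R q)) ∧ S.card ≤ m :=
    ⟨_, (A.exists_supp (Quot.out (Quot.mk R q))).choose_spec, hm ⟨Quot.mk R q, rfl⟩⟩
  obtain ⟨S0, hs0, hc0⟩ := key
  refine ⟨S0.image (π : Equiv.Perm Atom), ?_, le_trans Finset.card_image_le hc0⟩
  rw [← hπ]
  exact A.supp_smul _ _ hs0 π

lemma steps_smul (π : FinPerm) (q q' : A.Q) (u : List Atom)
    (h : Steps A q u q') :
    Steps A (A.smul π q) (u.map (π : Equiv.Perm Atom)) (A.smul π q') := by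
  induction u generalizing q with
  | nil => cases h; rfl
  | cons a u ih =>
      obtain ⟨r, hδ, h⟩ := h
      exact ⟨A.smul π r, A.equiv_δ π q a r hδ, ih r h⟩

end NOFA

/-- the language of all words in which every occurring letter
occurs at least twice is not NOFA-recognizable. -/
theorem twice_lang_not_nofa_recognizable :
    ¬ ∃ A : NOFA, A.lang = {w : List Atom | ∀ a ∈ w, 2 ≤ w.count a} := by
  classical
  rintro ⟨A, hA⟩
  obtain ⟨m, hm⟩ := A.exists_bound
  set n := m + 1 with hn
  set u : List Atom := List.range n with hu
  have hwL : (u ++ u) ∈ A.lang := by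
    rw [hA]
    intro a ha
    have hau : a ∈ u := by
      rcases List.mem_append.1 ha with h | h <;> exact h
    have h1 : u.count a = 1 := List.count_eq_one_of_mem (List.nodup_range (n := n)) hau
    rw [List.count_append, h1]
  obtain ⟨q₀, hq₀, hacc⟩ := hwL
  obtain ⟨q, hsteps, hacc2⟩ := (A.accepts_append u u q₀).1 hacc
  obtain ⟨S, hS, hcard⟩ := hm q
  have hex : ∃ a ∈ Finset.range n, a ∉ S := by
    by_contra h
    push_neg at h
    have hsub : Finset.range n ⊆ S := fun a ha => h a ha
    have := Finset.card_le_card hsub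
    rw [Finset.card_range] at this
    omega
  obtain ⟨a, han, haS⟩ := hex
  obtain ⟨b, hb⟩ := Infinite.exists_notMem_finset (S ∪ Finset.range n)
  have hbS : b ∉ S := fun h => hb (Finset.mem_union_left _ h)
  have hbn : b ∉ Finset.range n := fun h => hb (Finset.mem_union_right _ h)
  have hπmem : Equiv.swap a b ∈ FinPerm := by
    show ({x | Equiv.swap a b x ≠ x} : Set Atom).Finite
    apply Set.Finite.subset ((Set.finite_singleton b).insert a)
    intro x hx
    simp only [Set.mem_setOf_eq] at hx
    by_contra hx2
    simp only [Set.mem_insert_iff, Set.mem_singleton_iff, not_or] at hx2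
    exact hx (Equiv.swap_apply_of_ne_of_ne hx2.1 hx2.2)
  set π : FinPerm := ⟨Equiv.swap a b, hπmem⟩ with hπ
  have hcoe : ((π : Equiv.Perm Atom) : Atom → Atom) = Equiv.swap a b := rfl
  have hfix : A.smul π q = q := by
    have h := hS π 1 (fun c hc => ?_)
    · rw [h, A.one_smul]
    · have hca : c ≠ a := fun h => haS (h ▸ hc)
      have hcb : c ≠ b := fun h => hbS (h ▸ hc)
      show Equiv.swap a b c = ((1 : FinPerm) : Equiv.Perm Atom) c
      rw [Equiv.swap_apply_of_ne_of_ne hca hcb]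
      rfl
  have hacc3 := A.accepts_smul π q u hacc2
  rw [hfix, hcoe] at hacc3
  have hw' : (u ++ u.map (Equiv.swap a b)) ∈ A.lang :=
    ⟨q₀, hq₀, (A.accepts_append _ _ q₀).2 ⟨q, hsteps, hacc3⟩⟩
  rw [hA] at hw'
  have hau : a ∈ u := List.mem_range.2 (Finset.mem_range.1 han)
  have hain : a ∈ u ++ u.map (Equiv.swap a b) := List.mem_append.2 (Or.inl hau)
  have hge := hw' a hain
  have hcount0 : (u.map (Equiv.swap a b)).count a = 0 := by
    rw [List.count_eq_zero]
    intro h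
    obtain ⟨x, hx, hxe⟩ := List.mem_map.1 h
    have hxb : x = b := by
      have h2 := congrArg (Equiv.swap a b) hxe
      rwa [Equiv.swap_apply_self, Equiv.swap_apply_left] at h2
    subst hxb
    exact hbn (Finset.mem_range.2 (List.mem_range.1 hx))
  have hcount1 : u.count a = 1 := List.count_eq_one_of_mem (List.nodup_range (n := n)) hau
  rw [List.count_append, hcount0, hcount1] at hge
  omega
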